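/- arXiv:2103.05197 — 2 statements merged into one kernel-verified Lean document; each statement's English description precedes it below -/
import Mathlib

section
/- If δ = (1 + αᵀ Ω̄ α)^{-1/2} ω Ω̄ α, where Ω̄ = ω⁻¹ Ω ω⁻¹ is the correlation matrix associated with a positive definite matrix Ω and ω is the diagonal matrix of square roots of diagonal entries of Ω, then α = (1 − δᵀ Ω⁻¹ δ)^{-1/2} ω Ω⁻¹ δ. -/
open Matrix

/-- If `δ = (1 + αᵀ Ω̄ α)^{-1/2} ω Ω̄ α`, where `Ω̄ = ω⁻¹ Ω ω⁻¹` is the correlation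
matrix of a positive definite `Ω` and `ω` is the diagonal matrix of square roots of
the diagonal entries of `Ω`, then `α = (1 − δᵀ Ω⁻¹ δ)^{-1/2} ω Ω⁻¹ δ`. -/
theorem stmt7 {n : ℕ} (Ω : Matrix (Fin n) (Fin n) ℝ) (hΩ : Ω.PosDef)
    (hΩd : ∀ i, 0 < Ω i i)
    (ω : Matrix (Fin n) (Fin n) ℝ)
    (hω : ω = Matrix.diagonal fun i => Real.sqrt (Ω i i))
    (Ωbar : Matrix (Fin n) (Fin n) ℝ) (hΩbar : Ωbar = ω⁻¹ * Ω * ω⁻¹)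
    (α δ : Fin n → ℝ)
    (hδ : δ = (1 + α ⬝ᵥ (Ωbar *ᵥ α)) ^ (-(1/2 : ℝ)) • (ω *ᵥ (Ωbar *ᵥ α))) :
    α = (1 - δ ⬝ᵥ (Ω⁻¹ *ᵥ δ)) ^ (-(1/2 : ℝ)) • (ω *ᵥ (Ω⁻¹ *ᵥ δ)) := by
  have hωdet : IsUnit ω.det := by
    rw [hω, det_diagonal]
    exact (Finset.prod_pos fun i _ => Real.sqrt_pos.2 (hΩd i)).ne'.isUnit
  have hΩdet : IsUnit Ω.det := hΩ.det_pos.ne'.isUnit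
  have h1 : ω * ω⁻¹ = 1 := mul_nonsing_inv _ hωdet
  have h2 : ω⁻¹ * ω = 1 := nonsing_inv_mul _ hωdet
  have h3 : Ω⁻¹ * Ω = 1 := nonsing_inv_mul _ hΩdet
  set β := ω⁻¹ *ᵥ α with hβdef
  have hβ : ω *ᵥ β = α := by
    rw [hβdef, mulVec_mulVec, h1, one_mulVec]
  have key : ω *ᵥ (Ωbar *ᵥ α) = Ω *ᵥ β := by
    rw [hΩbar, hβdef, mulVec_mulVec, mulVec_mulVec, ← Matrix.mul_assoc,
      ← Matrix.mul_assoc, h1, Matrix.one_mul]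
  have hbar : Ωbar *ᵥ α = ω⁻¹ *ᵥ (Ω *ᵥ β) := by
    rw [← key, mulVec_mulVec, mulVec_mulVec, h2, Matrix.one_mul]
  have hωsymmInv : (ω⁻¹)ᵀ = ω⁻¹ := by
    rw [transpose_nonsing_inv, hω, diagonal_transpose]
  have hQ : α ⬝ᵥ (Ωbar *ᵥ α) = β ⬝ᵥ (Ω *ᵥ β) := by
    rw [hbar, dotProduct_mulVec, ← mulVec_transpose, hωsymmInv, ← hβdef]
  set Q := β ⬝ᵥ (Ω *ᵥ β) with hQdef
  have hQ0 : 0 ≤ Q := by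
    have := hΩ.posSemidef.dotProduct_mulVec_nonneg β
    simpa using this
  have ht : (0:ℝ) < 1 + Q := by linarith
  rw [hQ, key] at hδ
  set c := (1 + Q) ^ (-(1/2 : ℝ)) with hcdef
  have hinvδ : Ω⁻¹ *ᵥ δ = c • β := by
    rw [hδ, mulVec_smul, mulVec_mulVec, h3, one_mulVec]
  have hdot : δ ⬝ᵥ (Ω⁻¹ *ᵥ δ) = c * c * Q := by
    rw [hinvδ, hδ, smul_dotProduct, dotProduct_smul, dotProduct_comm, ← hQdef,
      smul_eq_mul, smul_eq_mul]
    ring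
  have hc2 : c * c = (1 + Q)⁻¹ := by
    rw [hcdef, ← Real.rpow_add ht]
    norm_num [Real.rpow_neg_one]
  have h1m : 1 - δ ⬝ᵥ (Ω⁻¹ *ᵥ δ) = (1 + Q)⁻¹ := by
    rw [hdot, hc2]
    field_simp
    ring
  rw [h1m, hinvδ]
  have hpow : ((1 + Q)⁻¹) ^ (-(1/2 : ℝ)) = (1 + Q) ^ (1/2 : ℝ) := by
    rw [← Real.rpow_neg_one, ← Real.rpow_mul ht.le]
    norm_num
  rw [hpow, mulVec_smul, hβ, smul_smul, hcdef, ← Real.rpow_add ht]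
  norm_num
end

section
/- The function f(z) = 2 φ(z) Φ(αz) is a probability density on ℝ for every α ∈ ℝ, i.e., ∫_ℝ 2 φ(z) Φ(αz) dz = 1. -/
open MeasureTheory Real

/-- The standard normal density. -/
noncomputable def stdNormalPDF (z : ℝ) : ℝ := (Real.sqrt (2 * π))⁻¹ * Real.exp (-z ^ 2 / 2)

/-- The standard normal cumulative distribution function. -/
noncomputable def stdNormalCDF (z : ℝ) : ℝ := ∫ t in Set.Iic z, stdNormalPDF t

lemma stdNormalPDF_eq : stdNormalPDF = ProbabilityTheory.gaussianPDFReal 0 1 := by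
  funext x
  simp [stdNormalPDF, ProbabilityTheory.gaussianPDFReal, neg_div]

lemma stdNormalPDF_nonneg (x : ℝ) : 0 ≤ stdNormalPDF x := by
  rw [stdNormalPDF_eq]; exact ProbabilityTheory.gaussianPDFReal_nonneg 0 1 x

lemma stdNormalPDF_measurable : Measurable stdNormalPDF := by
  rw [stdNormalPDF_eq]; exact ProbabilityTheory.measurable_gaussianPDFReal 0 1

lemma stdNormalPDF_integrable : Integrable stdNormalPDF := by
  rw [stdNormalPDF_eq]; exact ProbabilityTheory.integrable_gaussianPDFReal 0 1

lemma stdNormalPDF_integral : ∫ x, stdNormalPDF x = 1 := by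
  rw [stdNormalPDF_eq]; exact ProbabilityTheory.integral_gaussianPDFReal_eq_one 0 one_ne_zero

lemma stdNormalPDF_neg (x : ℝ) : stdNormalPDF (-x) = stdNormalPDF x := by
  simp [stdNormalPDF]

lemma stdNormalCDF_nonneg (x : ℝ) : 0 ≤ stdNormalCDF x :=
  setIntegral_nonneg measurableSet_Iic fun t _ => stdNormalPDF_nonneg t

lemma stdNormalCDF_le_one (x : ℝ) : stdNormalCDF x ≤ 1 := by
  rw [← stdNormalPDF_integral]
  exact setIntegral_le_integral stdNormalPDF_integrable
    (Filter.Eventually.of_forall stdNormalPDF_nonneg)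

lemma stdNormalCDF_mono : Monotone stdNormalCDF := fun a b hab =>
  setIntegral_mono_set stdNormalPDF_integrable.integrableOn
    (Filter.Eventually.of_forall stdNormalPDF_nonneg)
    (HasSubset.Subset.eventuallyLE (Set.Iic_subset_Iic.mpr hab))

lemma stdNormalCDF_add_neg (x : ℝ) : stdNormalCDF x + stdNormalCDF (-x) = 1 := by
  have h1 : stdNormalCDF (-x) = ∫ t in Set.Ioi x, stdNormalPDF t := by
    rw [stdNormalCDF, ← neg_neg x, ← integral_comp_neg_Iic]
    simp [stdNormalPDF_neg]
  rw [stdNormalCDF, h1, ← stdNormalPDF_integral]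
  have h := integral_add_compl (measurableSet_Iic (a := x)) stdNormalPDF_integrable
  rw [Set.compl_Iic] at h
  exact h

/-- For every `α ∈ ℝ`, `z ↦ 2 φ(z) Φ(α z)` is a probability density on `ℝ`:
`∫ 2 φ(z) Φ(α z) dz = 1`. -/
theorem stmt13 (α : ℝ) :
    ∫ z : ℝ, 2 * stdNormalPDF z * stdNormalCDF (α * z) = 1 := by
  have hmeas : AEStronglyMeasurable (fun z => stdNormalPDF z * stdNormalCDF (α * z)) volume :=
    (stdNormalPDF_measurable.mul
      (stdNormalCDF_mono.measurable.comp (measurable_const_mul α))).aestronglyMeasurable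
  have hint : Integrable (fun z => stdNormalPDF z * stdNormalCDF (α * z)) :=
    stdNormalPDF_integrable.mono' hmeas (Filter.Eventually.of_forall fun z => by
      rw [Real.norm_eq_abs, abs_of_nonneg (mul_nonneg (stdNormalPDF_nonneg z)
        (stdNormalCDF_nonneg _))]
      calc stdNormalPDF z * stdNormalCDF (α * z) ≤ stdNormalPDF z * 1 :=
            mul_le_mul_of_nonneg_left (stdNormalCDF_le_one _) (stdNormalPDF_nonneg z)
        _ = stdNormalPDF z := mul_one _)
  have hmeas' : AEStronglyMeasurable (fun z => stdNormalPDF z * stdNormalCDF (-(α * z))) volume :=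
    (stdNormalPDF_measurable.mul
      (stdNormalCDF_mono.measurable.comp (measurable_const_mul α).neg)).aestronglyMeasurable
  have hint' : Integrable (fun z => stdNormalPDF z * stdNormalCDF (-(α * z))) :=
    stdNormalPDF_integrable.mono' hmeas' (Filter.Eventually.of_forall fun z => by
      rw [Real.norm_eq_abs, abs_of_nonneg (mul_nonneg (stdNormalPDF_nonneg z)
        (stdNormalCDF_nonneg _))]
      calc stdNormalPDF z * stdNormalCDF (-(α * z)) ≤ stdNormalPDF z * 1 :=
            mul_le_mul_of_nonneg_left (stdNormalCDF_le_one _) (stdNormalPDF_nonneg z)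
        _ = stdNormalPDF z := mul_one _)
  have hneg : ∫ z, stdNormalPDF z * stdNormalCDF (α * z)
      = ∫ z, stdNormalPDF z * stdNormalCDF (-(α * z)) := by
    rw [← integral_neg_eq_self (fun z => stdNormalPDF z * stdNormalCDF (α * z)) volume]
    congr 1
    funext z
    rw [stdNormalPDF_neg, mul_neg]
  have key : (∫ z, stdNormalPDF z * stdNormalCDF (α * z))
      + ∫ z, stdNormalPDF z * stdNormalCDF (-(α * z)) = 1 := by
    rw [← integral_add hint hint']
    rw [← stdNormalPDF_integral]
    congr 1
    funext z
    rw [← mul_add, stdNormalCDF_add_neg, mul_one]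
  have : (2 : ℝ) * ∫ z, stdNormalPDF z * stdNormalCDF (α * z) = 1 := by
    rw [two_mul]; nth_rewrite 2 [hneg]; exact key
  calc ∫ z : ℝ, 2 * stdNormalPDF z * stdNormalCDF (α * z)
      = ∫ z : ℝ, 2 * (stdNormalPDF z * stdNormalCDF (α * z)) := by
        congr 1; funext z; ring
    _ = 2 * ∫ z, stdNormalPDF z * stdNormalCDF (α * z) := integral_const_mul 2 _
    _ = 1 := this
end
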